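/- arXiv:2603.07488 — 3 statements merged into one kernel-verified Lean document; each statement's English description precedes it below -/
import Mathlib

section
/- In the simplicial setup, every element x of B_A can be written as x = Σ_{i=1}^c μ_[i]·a_i with μ ∈ ℤ^c and 0 ≤ μ_[i] ≤ α for all i; consequently B_A is a finite set. Moreover, if x + y ∈ B_A with x, y ∈ B, then x ∈ B_A and y ∈ B_A. -/
namespace SimplicialToric

/-- `eVec d α i` is `α` times the `i`-th standard basis vector of `ℕ^d`. -/
def eVec (d α : ℕ) (i : Fin d) : Fin d → ℕ := fun j => if j = i then α else 0

/-- The Hilbert basis of a submonoid `B ⊆ ℕ^d`: the set of irreducible elements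
(in `ℕ^d` the only unit is `0`). -/
def Hilb {d : ℕ} (B : AddSubmonoid (Fin d → ℕ)) : Set (Fin d → ℕ) :=
  {b | b ∈ B ∧ b ≠ 0 ∧ ∀ x ∈ B, ∀ y ∈ B, b = x + y → x = 0 ∨ y = 0}

/-- The submonoid `A = Σᵢ ℤ≥0·eᵢ = αℤ≥0^d`. -/
def Amon (d α : ℕ) : AddSubmonoid (Fin d → ℕ) :=
  AddSubmonoid.closure (Set.range (eVec d α))

/-- `B_A = {x ∈ B : x − a ∉ B for every a ∈ A \ {0}}`. -/
def BA {d : ℕ} (B : AddSubmonoid (Fin d → ℕ)) (α : ℕ) : Set (Fin d → ℕ) :=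
  {x | x ∈ B ∧ ∀ z ∈ Amon d α, z ≠ 0 → ∀ y ∈ B, x ≠ y + z}

/-- The generators `a₁,…,a_c,e₁,…,e_d` of `B`, indexed by the variables of
`S = K[x₁,…,x_c,y₁,…,y_d]`; variable `Fin.castAdd d i` is `xᵢ`, variable
`Fin.natAdd c j` is `yⱼ`. -/
def gens (c d α : ℕ) (a : Fin c → Fin d → ℕ) : Fin (c + d) → Fin d → ℕ :=
  Fin.addCases a (eVec d α)

/-- The element of `B` represented by the monomial with exponent vector `σ`:
`π(x^μ y^ν) = t^(valE σ)`. -/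
def valE (c d α : ℕ) (a : Fin c → Fin d → ℕ) (σ : Fin (c + d) →₀ ℕ) : Fin d → ℕ :=
  ∑ v : Fin (c + d), σ v • gens c d α a v

/-- total degree of a monomial (exponent vector). -/
def degE {N : ℕ} (σ : Fin N →₀ ℕ) : ℕ := ∑ v, σ v

/-- the graded reverse lexicographic order: `grevlex σ τ` means `σ ≺ τ`,
i.e. `deg σ < deg τ`, or degrees agree and the last nonzero entry of `τ − σ`
is negative. -/
def grevlex {N : ℕ} (σ τ : Fin N →₀ ℕ) : Prop :=
  degE σ < degE τ ∨ (degE σ = degE τ ∧ ∃ k, τ k < σ k ∧ ∀ l, k < l → σ l = τ l)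

/-- `x ∼ y` iff `x − y ∈ gp(A) = αℤ^d`. -/
def Rel {d : ℕ} (α : ℕ) (x y : Fin d → ℕ) : Prop :=
  ∀ j, (α : ℤ) ∣ (x j : ℤ) - (y j : ℤ)

/-- `Γ` is an equivalence class of `B_A` modulo `αℤ^d`. -/
def IsClass {d : ℕ} (B : AddSubmonoid (Fin d → ℕ)) (α : ℕ) (Γ : Set (Fin d → ℕ)) : Prop :=
  ∃ x ∈ BA B α, Γ = {y | y ∈ BA B α ∧ Rel α x y}

/-- the total order on an equivalence class of `B_A`: `b ≺ c` iff the last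
nonzero entry of `b − c` is negative. -/
def ltCls {d : ℕ} (x y : Fin d → ℕ) : Prop :=
  ∃ k, x k < y k ∧ ∀ l, k < l → x l = y l

/-- `joinSub x y = x∨y − y`, where `x∨y` is the componentwise maximum. -/
def joinSub {d : ℕ} (x y : Fin d → ℕ) : Fin d → ℕ := fun j => max (x j) (y j) - y j

/-- the monomial with exponents `σ` lies in `T = K[y₁,…,y_d]`. -/
def yOnly (c d : ℕ) (σ : Fin (c + d) →₀ ℕ) : Prop := ∀ i : Fin c, σ (Fin.castAdd d i) = 0

/-- the monomial with exponents `σ` involves only the `x`-variables. -/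
def xOnly (c d : ℕ) (σ : Fin (c + d) →₀ ℕ) : Prop := ∀ j : Fin d, σ (Fin.natAdd c j) = 0

/-- the set `N₁`, for a given choice `m` of the minimal monomials `m_b`. -/
def N1set (c d α : ℕ) (a : Fin c → Fin d → ℕ) (B : AddSubmonoid (Fin d → ℕ))
    (m : (Fin d → ℕ) → (Fin (c + d) →₀ ℕ)) : Set (Fin (c + d) →₀ ℕ) :=
  {n | ∃ (i : Fin c) (b : Fin d → ℕ), b ∈ BA B α ∧
    n = Finsupp.single (Fin.castAdd d i) 1 + m b ∧ n ≠ m (a i + b)}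

/-- the set `N₂ = ∪_Γ N_Γ`, where `N_Γ = {n(bᵢ,bⱼ) = m_{bⱼ}·m_{bᵢ∨bⱼ−bⱼ} : bᵢ ≺ bⱼ in Γ}`. -/
def N2set {d : ℕ} (c α : ℕ) (B : AddSubmonoid (Fin d → ℕ))
    (m : (Fin d → ℕ) → (Fin (c + d) →₀ ℕ)) : Set (Fin (c + d) →₀ ℕ) :=
  {n | ∃ Γ, IsClass B α Γ ∧ ∃ bi ∈ Γ, ∃ bj ∈ Γ, ltCls bi bj ∧ n = m bj + m (joinSub bi bj)}

/-- `σ` is the exponent vector of the initial (i.e. `≺`-largest) term of `f`. -/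
def IsLeadMon {N : ℕ} {K : Type*} [Field K] (f : MvPolynomial (Fin N) K)
    (σ : Fin N →₀ ℕ) : Prop :=
  σ ∈ f.support ∧ ∀ τ ∈ f.support, τ = σ ∨ grevlex τ σ

/-- the initial ideal of `I` with respect to the graded reverse lexicographic order. -/
noncomputable def initialIdeal {N : ℕ} {K : Type*} [Field K] (I : Ideal (MvPolynomial (Fin N) K)) :
    Ideal (MvPolynomial (Fin N) K) :=
  Ideal.span {g | ∃ f ∈ I, ∃ σ, IsLeadMon f σ ∧ g = MvPolynomial.monomial σ (1 : K)}

end SimplicialToric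

open SimplicialToric

section AuxLemmas

open SimplicialToric

variable {c d α : ℕ} {a : Fin c → Fin d → ℕ}

private lemma eVec_mem_Amon (j : Fin d) : eVec d α j ∈ Amon d α :=
  AddSubmonoid.subset_closure ⟨j, rfl⟩

private lemma sum_nu_mem_Amon (ν : Fin d → ℕ) :
    (∑ j, ν j • eVec d α j) ∈ Amon d α :=
  sum_mem fun j _ => AddSubmonoid.nsmul_mem _ (eVec_mem_Amon j) _

private lemma repr_of_mem (B : AddSubmonoid (Fin d → ℕ))
    (hBgen : B = AddSubmonoid.closure (Set.range a ∪ Set.range (eVec d α)))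
    {x : Fin d → ℕ} (hx : x ∈ B) :
    ∃ μ : Fin c → ℕ, ∃ ν : Fin d → ℕ,
      x = ∑ i, μ i • a i + ∑ j, ν j • eVec d α j := by
  rw [hBgen] at hx
  induction hx using AddSubmonoid.closure_induction with
  | mem z hz =>
    rcases hz with ⟨i, rfl⟩ | ⟨j, rfl⟩
    · refine ⟨fun i' => if i' = i then 1 else 0, 0, ?_⟩
      simp [ite_smul, Finset.sum_ite_eq']
    · refine ⟨0, fun j' => if j' = j then 1 else 0, ?_⟩
      simp [ite_smul, Finset.sum_ite_eq']
  | zero => exact ⟨0, 0, by simp⟩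
  | add x y hx hy ihx ihy =>
    obtain ⟨μ₁, ν₁, rfl⟩ := ihx
    obtain ⟨μ₂, ν₂, rfl⟩ := ihy
    refine ⟨μ₁ + μ₂, ν₁ + ν₂, ?_⟩
    simp only [Pi.add_apply, add_smul, Finset.sum_add_distrib]
    abel

end AuxLemmas

/-- Every element of `B_A` is a sum `Σ μᵢ aᵢ` with `0 ≤ μᵢ ≤ α`;
consequently `B_A` is finite; and `x + y ∈ B_A` with `x, y ∈ B` forces `x, y ∈ B_A`. -/
theorem BA_repr_bounded_finite_and_summand_closed
    (c d α : ℕ) (hα : 0 < α)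
    (a : Fin c → Fin d → ℕ) (B : AddSubmonoid (Fin d → ℕ))
    (hBgen : B = AddSubmonoid.closure (Set.range a ∪ Set.range (eVec d α)))
    (hhilb : Hilb B = Set.range a ∪ Set.range (eVec d α))
    (hdeg : ∀ i, ∑ j, a i j = α) :
    (∀ x ∈ BA B α, ∃ μ : Fin c → ℕ, (∀ i, μ i ≤ α) ∧ x = ∑ i, μ i • a i) ∧
    (BA B α).Finite ∧
    (∀ x ∈ B, ∀ y ∈ B, x + y ∈ BA B α → x ∈ BA B α ∧ y ∈ BA B α) := by
  have haB : ∀ i, a i ∈ B := fun i => by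
    rw [hBgen]; exact AddSubmonoid.subset_closure (Or.inl ⟨i, rfl⟩)
  have heB : ∀ j, eVec d α j ∈ B := fun j => by
    rw [hBgen]; exact AddSubmonoid.subset_closure (Or.inr ⟨j, rfl⟩)
  have part1 : ∀ x ∈ BA B α, ∃ μ : Fin c → ℕ, (∀ i, μ i ≤ α) ∧ x = ∑ i, μ i • a i := by
    intro x hx
    obtain ⟨μ, ν, hrepr⟩ := repr_of_mem B hBgen hx.1
    -- first, all ν j = 0
    have hν : ∀ j, ν j = 0 := by
      intro j₀
      by_contra h0
      have hpos : 1 ≤ ν j₀ := Nat.one_le_iff_ne_zero.mpr h0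
      set ν' : Fin d → ℕ := Function.update ν j₀ (ν j₀ - 1) with hν'
      have hsplit : ∑ j, ν j • eVec d α j
          = (∑ j, ν' j • eVec d α j) + eVec d α j₀ := by
        rw [Finset.sum_eq_add_sum_sdiff_singleton_of_mem (Finset.mem_univ j₀)
            (fun j => ν j • eVec d α j),
          Finset.sum_eq_add_sum_sdiff_singleton_of_mem (Finset.mem_univ j₀)
            (fun j => ν' j • eVec d α j)]
        have h1 : ν' j₀ = ν j₀ - 1 := Function.update_self _ _ _
        have h2 : ∀ j ∈ Finset.univ \ {j₀}, ν' j • eVec d α j = ν j • eVec d α j := by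
          intro j hj
          rw [hν', Function.update_of_ne (by simpa using (Finset.mem_sdiff.mp hj).2)]
        rw [Finset.sum_congr rfl h2, h1]
        have : (ν j₀ - 1) • eVec d α j₀ + eVec d α j₀ = ν j₀ • eVec d α j₀ := by
          rw [← succ_nsmul, Nat.sub_add_cancel hpos]
        rw [add_right_comm, this]
      have hxeq : x = (∑ i, μ i • a i + ∑ j, ν' j • eVec d α j) + eVec d α j₀ := by
        rw [hrepr, hsplit, add_assoc]
      have hne : eVec d α j₀ ≠ 0 := by
        intro h
        have := congrFun h j₀
        simp [eVec] at this
        omega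
      exact hx.2 (eVec d α j₀) (eVec_mem_Amon j₀) hne
        (∑ i, μ i • a i + ∑ j, ν' j • eVec d α j)
        (B.add_mem (sum_mem fun i _ => B.nsmul_mem (haB i) _)
          (sum_mem fun j _ => B.nsmul_mem (heB j) _)) hxeq
    have hx2 : x = ∑ i, μ i • a i := by
      rw [hrepr]
      have : ∑ j, ν j • eVec d α j = 0 := by
        apply Finset.sum_eq_zero; intro j _; rw [hν j]; simp
      rw [this, add_zero]
    -- now, all μ i ≤ α
    refine ⟨μ, ?_, hx2⟩
    intro i₀
    by_contra hgt
    push_neg at hgt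
    set μ' : Fin c → ℕ := Function.update μ i₀ (μ i₀ - α) with hμ'
    have hzmem : (α • a i₀ : Fin d → ℕ) ∈ Amon d α := by
      have : (α • a i₀ : Fin d → ℕ) = ∑ j, a i₀ j • eVec d α j := by
        funext j
        simp only [Pi.smul_apply, smul_eq_mul, Finset.sum_apply, eVec, mul_ite, mul_zero]
        rw [Finset.sum_ite_eq]
        simp [Nat.mul_comm]
      rw [this]
      exact sum_nu_mem_Amon _
    have hzne : (α • a i₀ : Fin d → ℕ) ≠ 0 := by
      intro h
      have hsum := hdeg i₀
      have hai : a i₀ = 0 := by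
        funext j
        have := congrFun h j
        simp only [Pi.smul_apply, smul_eq_mul, Pi.zero_apply] at this ⊢
        exact (Nat.mul_eq_zero.mp this).resolve_left (by omega)
      rw [hai] at hsum
      simp at hsum
      omega
    have hsplit : ∑ i, μ i • a i = (∑ i, μ' i • a i) + α • a i₀ := by
      rw [Finset.sum_eq_add_sum_sdiff_singleton_of_mem (Finset.mem_univ i₀)
          (fun i => μ i • a i),
        Finset.sum_eq_add_sum_sdiff_singleton_of_mem (Finset.mem_univ i₀)
          (fun i => μ' i • a i)]
      have h1 : μ' i₀ = μ i₀ - α := Function.update_self _ _ _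
      have h2 : ∀ i ∈ Finset.univ \ {i₀}, μ' i • a i = μ i • a i := by
        intro i hi
        rw [hμ', Function.update_of_ne (by simpa using (Finset.mem_sdiff.mp hi).2)]
      rw [Finset.sum_congr rfl h2, h1, add_right_comm, ← add_nsmul,
        Nat.sub_add_cancel (le_of_lt hgt)]
    exact hx.2 (α • a i₀) hzmem hzne (∑ i, μ' i • a i)
      (sum_mem fun i _ => B.nsmul_mem (haB i) _)
      (by rw [hx2, hsplit])
  refine ⟨part1, ?_, ?_⟩
  · apply Set.Finite.subset
      (Set.finite_range (fun μ : Fin c → Fin (α + 1) => ∑ i, (μ i : ℕ) • a i))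
    intro x hx
    obtain ⟨μ, hle, heq⟩ := part1 x hx
    exact ⟨fun i => ⟨μ i, Nat.lt_succ_of_le (hle i)⟩, heq.symm⟩
  · intro x hx y hy hxy
    constructor
    · refine ⟨hx, ?_⟩
      intro z hz hzne w hw hxw
      exact hxy.2 z hz hzne (w + y) (B.add_mem hw hy)
        (by rw [hxw, add_right_comm])
    · refine ⟨hy, ?_⟩
      intro z hz hzne w hw hyw
      exact hxy.2 z hz hzne (x + w) (B.add_mem hx hw)
        (by rw [hyw, ← add_assoc])
end

section
/- In the simplicial setup, let b_i ≺ b_j be two elements of one equivalence class of B_A. Then the binomial n(b_i, b_j) − m_{b_i}·m_{(b_i∨b_j − b_i)} lies in ker π, and m_{b_i}·m_{(b_i∨b_j − b_i)} ≺ n(b_i, b_j); consequently n(b_i, b_j) ∉ M_B. -/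
open SimplicialToric
section Helpers

variable {c d α : ℕ} {a : Fin c → Fin d → ℕ} {B : AddSubmonoid (Fin d → ℕ)}

lemma gens_castAdd (i : Fin c) : gens c d α a (Fin.castAdd d i) = a i :=
  Fin.addCases_left i

lemma gens_natAdd (j : Fin d) : gens c d α a (Fin.natAdd c j) = eVec d α j :=
  Fin.addCases_right j

lemma sum_gens (hdeg : ∀ i, ∑ j, a i j = α) (v : Fin (c + d)) :
    ∑ j, gens c d α a v j = α := by
  induction v using Fin.addCases with
  | left i => rw [gens_castAdd]; exact hdeg i
  | right j => rw [gens_natAdd]; simp [eVec]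

lemma valE_apply (σ : Fin (c + d) →₀ ℕ) (j0 : Fin d) :
    valE c d α a σ j0 =
      (∑ i, σ (Fin.castAdd d i) * a i j0) + σ (Fin.natAdd c j0) * α := by
  unfold valE
  rw [Finset.sum_apply, Fin.sum_univ_add]
  congr 1
  · exact Finset.sum_congr rfl fun i _ => by rw [Pi.smul_apply, gens_castAdd, smul_eq_mul]
  · rw [Finset.sum_congr rfl fun j _ => by rw [Pi.smul_apply, gens_natAdd, smul_eq_mul]]
    simp [eVec, mul_ite, Finset.sum_ite_eq]

lemma sum_valE (hdeg : ∀ i, ∑ j, a i j = α) (σ : Fin (c + d) →₀ ℕ) :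
    ∑ j, valE c d α a σ j = α * degE σ := by
  unfold valE degE
  simp only [Finset.sum_apply]
  rw [Finset.sum_comm]
  rw [Finset.sum_congr rfl fun v _ => ?_, ← Finset.sum_mul, mul_comm]
  calc ∑ j, (σ v • gens c d α a v) j = σ v * ∑ j, gens c d α a v j := by
        rw [Finset.mul_sum]; exact Finset.sum_congr rfl fun j _ => rfl
    _ = σ v * α := by rw [sum_gens hdeg]

lemma degE_eq_of_valE (hα : 0 < α) (hdeg : ∀ i, ∑ j, a i j = α)
    {σ τ : Fin (c + d) →₀ ℕ} (h : valE c d α a σ = valE c d α a τ) :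
    degE σ = degE τ := by
  have h1 := sum_valE (a := a) hdeg σ
  have h2 := sum_valE (a := a) hdeg τ
  rw [h, h2] at h1
  exact (Nat.eq_of_mul_eq_mul_left hα h1.symm)

lemma valE_add (σ τ : Fin (c + d) →₀ ℕ) :
    valE c d α a (σ + τ) = valE c d α a σ + valE c d α a τ := by
  funext j0
  simp only [Pi.add_apply, valE_apply, Finsupp.add_apply, add_mul, Finset.sum_add_distrib]
  ring

lemma gens_mem (hBgen : B = AddSubmonoid.closure (Set.range a ∪ Set.range (eVec d α)))
    (v : Fin (c + d)) : gens c d α a v ∈ B := by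
  rw [hBgen]
  apply AddSubmonoid.subset_closure
  induction v using Fin.addCases with
  | left i => rw [gens_castAdd]; exact Or.inl ⟨i, rfl⟩
  | right j => rw [gens_natAdd]; exact Or.inr ⟨j, rfl⟩

lemma valE_mem (hBgen : B = AddSubmonoid.closure (Set.range a ∪ Set.range (eVec d α)))
    (σ : Fin (c + d) →₀ ℕ) : valE c d α a σ ∈ B := by
  unfold valE
  exact sum_mem fun v _ => AddSubmonoid.nsmul_mem B (gens_mem hBgen v) _

lemma grevlex_asymm {N : ℕ} {σ τ : Fin N →₀ ℕ} (h1 : grevlex σ τ) (h2 : grevlex τ σ) :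
    False := by
  rcases h1 with h1 | ⟨hd1, k1, hk1, ht1⟩ <;> rcases h2 with h2 | ⟨hd2, k2, hk2, ht2⟩
  · omega
  · omega
  · omega
  · rcases lt_trichotomy k1 k2 with h | h | h
    · have := ht1 k2 h; omega
    · subst h; omega
    · have := ht2 k1 h; omega

lemma grevlex_irrefl {N : ℕ} (σ : Fin N →₀ ℕ) : ¬ grevlex σ σ :=
  fun h => grevlex_asymm h h

end Helpers
section Helpers2

variable {c d α : ℕ} {a : Fin c → Fin d → ℕ} {B : AddSubmonoid (Fin d → ℕ)}

/-- the pure `y`-monomial with value `q` (for `q` with all coordinates divisible by `α`). -/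
noncomputable def yMon (c d α : ℕ) (q : Fin d → ℕ) : Fin (c + d) →₀ ℕ :=
  Finsupp.equivFunOnFinite.symm (Fin.addCases (fun _ => 0) (fun j => q j / α))

lemma yMon_castAdd (q : Fin d → ℕ) (i : Fin c) : yMon c d α q (Fin.castAdd d i) = 0 := by
  simp [yMon, Finsupp.equivFunOnFinite]
  show Fin.addCases (fun _ => (0 : ℕ)) (fun j => q j / α) (Fin.castAdd d i) = 0
  exact Fin.addCases_left _

lemma yMon_natAdd (q : Fin d → ℕ) (j : Fin d) :
    yMon c d α q (Fin.natAdd c j) = q j / α := by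
  simp [yMon, Finsupp.equivFunOnFinite]
  show Fin.addCases (fun _ => (0 : ℕ)) (fun j => q j / α) (Fin.natAdd c j) = q j / α
  exact Fin.addCases_right _

lemma valE_yMon (hq : ∀ j, α ∣ q j) : valE c d α a (yMon c d α q) = q := by
  funext j0
  rw [valE_apply, yMon_natAdd, Nat.div_mul_cancel (hq j0)]
  simp [yMon_castAdd]

lemma mem_of_dvd (hBgen : B = AddSubmonoid.closure (Set.range a ∪ Set.range (eVec d α)))
    {q : Fin d → ℕ} (hq : ∀ j, α ∣ q j) : q ∈ B := by
  have h := valE_mem hBgen (yMon c d α q)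
  rwa [valE_yMon hq] at h

lemma valE_single (v : Fin (c + d)) :
    valE c d α a (Finsupp.single v 1) = gens c d α a v := by
  unfold valE
  rw [Finset.sum_eq_single v]
  · simp
  · intro w _ hw
    simp [Finsupp.single_apply, Ne.symm hw]
  · simp

end Helpers2

section Mlemmas

variable {c d α : ℕ} {a : Fin c → Fin d → ℕ} {B : AddSubmonoid (Fin d → ℕ)}
  {m : (Fin d → ℕ) → (Fin (c + d) →₀ ℕ)}

lemma m_eq_yMon (hα : 0 < α)
    (hBgen : B = AddSubmonoid.closure (Set.range a ∪ Set.range (eVec d α)))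
    (hdeg : ∀ i, ∑ j, a i j = α)
    (hmval : ∀ b ∈ B, valE c d α a (m b) = b)
    (hmmin : ∀ b ∈ B, ∀ σ, valE c d α a σ = b → m b = σ ∨ grevlex (m b) σ)
    {q : Fin d → ℕ} (hq : ∀ j, α ∣ q j) : m q = yMon c d α q := by
  have hqB : q ∈ B := mem_of_dvd hBgen hq
  have hval : valE c d α a (yMon c d α q) = q := valE_yMon hq
  rcases hmmin q hqB _ hval with h | h
  · exact h
  exfalso
  have hdegeq : degE (m q) = degE (yMon c d α q) :=
    degE_eq_of_valE hα hdeg (by rw [hmval q hqB, hval])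
  rcases h with h | ⟨_, K, hK, hT⟩
  · omega
  have hv : ∀ j0 : Fin d, q j0 =
      (∑ i, (m q) (Fin.castAdd d i) * a i j0) + (m q) (Fin.natAdd c j0) * α := by
    intro j0
    conv_lhs => rw [← hmval q hqB]
    rw [valE_apply]
  induction K using Fin.addCases with
  | left i =>
    have hy : ∀ j : Fin d, (m q) (Fin.natAdd c j) = q j / α := by
      intro j
      have hlt : Fin.castAdd d i < Fin.natAdd c j := by
        simp [Fin.lt_def]
        omega
      rw [hT _ hlt, yMon_natAdd]
    have h0 : ∀ j0 : Fin d, ∑ i, (m q) (Fin.castAdd d i) * a i j0 = 0 := by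
      intro j0
      have := hv j0
      rw [hy j0, Nat.div_mul_cancel (hq j0)] at this
      omega
    have hsum : ∑ i, (m q) (Fin.castAdd d i) * α = 0 := by
      calc ∑ i, (m q) (Fin.castAdd d i) * α
          = ∑ i, ∑ j0, (m q) (Fin.castAdd d i) * a i j0 := by
            refine Finset.sum_congr rfl fun i _ => ?_
            rw [← Finset.mul_sum, hdeg i]
        _ = ∑ j0, ∑ i, (m q) (Fin.castAdd d i) * a i j0 := Finset.sum_comm
        _ = 0 := by simp [h0]
    have hi := (Finset.sum_eq_zero_iff.mp hsum) i (Finset.mem_univ i)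
    rw [yMon_castAdd] at hK
    nlinarith
  | right j =>
    rw [yMon_natAdd] at hK
    have h1 : (q j / α + 1) * α ≤ (m q) (Fin.natAdd c j) * α :=
      Nat.mul_le_mul_right α hK
    rw [add_mul, one_mul, Nat.div_mul_cancel (hq j)] at h1
    have := hv j
    omega

lemma m_xOnly (hBgen : B = AddSubmonoid.closure (Set.range a ∪ Set.range (eVec d α)))
    (hα : 0 < α)
    (hmval : ∀ b ∈ B, valE c d α a (m b) = b)
    {b : Fin d → ℕ} (hb : b ∈ BA B α) (j : Fin d) : m b (Fin.natAdd c j) = 0 := by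
  by_contra hne
  set v := Fin.natAdd c j with hvdef
  have hmb : valE c d α a (m b) = b := hmval b hb.1
  set σ' := m b - Finsupp.single v 1 with hσ'
  have hsum : σ' + Finsupp.single v 1 = m b := by
    ext w
    simp only [Finsupp.add_apply, hσ', Finsupp.tsub_apply, Finsupp.single_apply]
    rcases eq_or_ne v w with rfl | hw
    · rw [if_pos rfl]; omega
    · simp [hw]
  have hbeq : b = valE c d α a σ' + eVec d α j := by
    rw [← hmb, ← hsum, valE_add, valE_single, gens_natAdd]
  exact hb.2 (eVec d α j)
    (AddSubmonoid.subset_closure ⟨j, rfl⟩)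
    (fun h0 => by
      have := congrFun h0 j
      simp [eVec] at this
      omega)
    (valE c d α a σ') (valE_mem hBgen σ') hbeq

end Mlemmas
section PiLemma

variable {c d α : ℕ} {a : Fin c → Fin d → ℕ}

lemma pi_monomial {K : Type*} [Field K]
    (π : MvPolynomial (Fin (c + d)) K →ₐ[K] AddMonoidAlgebra K (Fin d → ℕ))
    (hπ : ∀ v, π (MvPolynomial.X v) = AddMonoidAlgebra.of' K (Fin d → ℕ) (gens c d α a v))
    (σ : Fin (c + d) →₀ ℕ) :
    π (MvPolynomial.monomial σ (1 : K)) =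
      AddMonoidAlgebra.single (valE c d α a σ) (1 : K) := by
  have hmono : (MvPolynomial.monomial σ (1 : K)) = ∏ v, MvPolynomial.X v ^ σ v := by
    rw [← MvPolynomial.prod_X_pow_eq_monomial]
    apply Finset.prod_subset (Finset.subset_univ _)
    intro v _ hv
    rw [Finsupp.notMem_support_iff.mp hv, pow_zero]
  rw [hmono, map_prod]
  have hstep : ∀ v : Fin (c + d), π (MvPolynomial.X v ^ σ v) =
      AddMonoidAlgebra.single (σ v • gens c d α a v) (1 : K) := by
    intro v
    rw [map_pow, hπ v, AddMonoidAlgebra.of'_apply, AddMonoidAlgebra.single_pow, one_pow]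
  rw [Finset.prod_congr rfl fun v _ => hstep v, AddMonoidAlgebra.prod_single,
    Finset.prod_const_one]
  rfl

end PiLemma

/-- For `bᵢ ≺ bⱼ` in one equivalence class of `B_A`, the binomial
`n(bᵢ,bⱼ) − m_{bᵢ}·m_{bᵢ∨bⱼ−bᵢ}` lies in `ker π`, `m_{bᵢ}·m_{bᵢ∨bⱼ−bᵢ} ≺ n(bᵢ,bⱼ)`,
and consequently `n(bᵢ,bⱼ) ∉ M_B`. -/
theorem n_monomial_not_in_MB
    (c d α : ℕ) (hα : 0 < α)
    (a : Fin c → Fin d → ℕ) (B : AddSubmonoid (Fin d → ℕ))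
    (hBgen : B = AddSubmonoid.closure (Set.range a ∪ Set.range (eVec d α)))
    (hhilb : Hilb B = Set.range a ∪ Set.range (eVec d α))
    (hdeg : ∀ i, ∑ j, a i j = α)
    (m : (Fin d → ℕ) → (Fin (c + d) →₀ ℕ))
    (hmval : ∀ b ∈ B, valE c d α a (m b) = b)
    (hmmin : ∀ b ∈ B, ∀ σ, valE c d α a σ = b → m b = σ ∨ grevlex (m b) σ)
    (K : Type*) [Field K]
    (π : MvPolynomial (Fin (c + d)) K →ₐ[K] AddMonoidAlgebra K (Fin d → ℕ))
    (hπ : ∀ v, π (MvPolynomial.X v) = AddMonoidAlgebra.of' K (Fin d → ℕ) (gens c d α a v))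
    (bi bj : Fin d → ℕ) (hbi : bi ∈ BA B α) (hbj : bj ∈ BA B α)
    (hrel : Rel α bi bj) (hlt : ltCls bi bj) :
    (MvPolynomial.monomial (m bj + m (joinSub bi bj)) (1 : K)
        - MvPolynomial.monomial (m bi + m (joinSub bj bi)) (1 : K))
      ∈ RingHom.ker π.toRingHom ∧
    grevlex (m bi + m (joinSub bj bi)) (m bj + m (joinSub bi bj)) ∧
    ¬ ∃ b ∈ (B : Set (Fin d → ℕ)), m bj + m (joinSub bi bj) = m b := by
  have hbiB := hbi.1
  have hbjB := hbj.1
  have key : ∀ (x y : Fin d → ℕ), (∀ j, (α : ℤ) ∣ (x j : ℤ) - (y j : ℤ)) →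
      ∀ j, α ∣ joinSub x y j := by
    intro x y h j
    have h' := h j
    rcases le_total (x j) (y j) with h2 | h2
    · have h0 : joinSub x y j = 0 := by
        show max (x j) (y j) - y j = 0
        omega
      rw [h0]
      exact dvd_zero α
    · have heq : joinSub x y j = x j - y j := by
        show max (x j) (y j) - y j = x j - y j
        omega
      rw [heq]
      have hc : ((x j - y j : ℕ) : ℤ) = (x j : ℤ) - (y j : ℤ) := by omega
      exact_mod_cast hc ▸ h'
  have hdvdI : ∀ j, α ∣ joinSub bj bi j := key bj bi fun j => dvd_sub_comm.mp (hrel j)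
  have hdvdJ : ∀ j, α ∣ joinSub bi bj j := key bi bj hrel
  have hmqI : m (joinSub bj bi) = yMon c d α (joinSub bj bi) :=
    m_eq_yMon hα hBgen hdeg hmval hmmin hdvdI
  have hmqJ : m (joinSub bi bj) = yMon c d α (joinSub bi bj) :=
    m_eq_yMon hα hBgen hdeg hmval hmmin hdvdJ
  have hqIB : joinSub bj bi ∈ B := mem_of_dvd hBgen hdvdI
  have hqJB : joinSub bi bj ∈ B := mem_of_dvd hBgen hdvdJ
  set vj : Fin d → ℕ := fun j => max (bi j) (bj j) with hvj
  have hvI : bi + joinSub bj bi = vj := by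
    funext j
    show bi j + (max (bj j) (bi j) - bi j) = max (bi j) (bj j)
    omega
  have hvJ : bj + joinSub bi bj = vj := by
    funext j
    show bj j + (max (bi j) (bj j) - bj j) = max (bi j) (bj j)
    omega
  have hvalσ : valE c d α a (m bi + m (joinSub bj bi)) = vj := by
    rw [valE_add, hmval bi hbiB, hmval _ hqIB, hvI]
  have hvalτ : valE c d α a (m bj + m (joinSub bi bj)) = vj := by
    rw [valE_add, hmval bj hbjB, hmval _ hqJB, hvJ]
  obtain ⟨k, hk1, hk2⟩ := hlt
  have hxbi := m_xOnly hBgen hα hmval hbi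
  have hxbj := m_xOnly hBgen hα hmval hbj
  have hgrev : grevlex (m bi + m (joinSub bj bi)) (m bj + m (joinSub bi bj)) := by
    right
    refine ⟨degE_eq_of_valE hα hdeg (hvalσ.trans hvalτ.symm), Fin.natAdd c k, ?_, ?_⟩
    · rw [Finsupp.add_apply, Finsupp.add_apply, hxbi k, hxbj k, hmqI, hmqJ,
        yMon_natAdd, yMon_natAdd]
      have h1 : joinSub bi bj k = 0 := by
        show max (bi k) (bj k) - bj k = 0
        omega
      have hpos : 0 < joinSub bj bi k := by
        show 0 < max (bj k) (bi k) - bi k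
        omega
      have h2 : 0 < joinSub bj bi k / α :=
        Nat.div_pos (Nat.le_of_dvd hpos (hdvdI k)) hα
      rw [h1]
      simpa using h2
    · intro L hL
      induction L using Fin.addCases with
      | left i =>
        exact absurd hL (by simp only [Fin.lt_def, Fin.coe_natAdd, Fin.coe_castAdd]; omega)
      | right l =>
        have hkl : k < l := by
          have := hL
          simp only [Fin.lt_def, Fin.coe_natAdd] at this
          exact Fin.lt_def.mpr (by omega)
        have hbl : bi l = bj l := hk2 l hkl
        rw [Finsupp.add_apply, Finsupp.add_apply, hxbi l, hxbj l, hmqI, hmqJ,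
          yMon_natAdd, yMon_natAdd]
        have h1 : joinSub bj bi l = 0 := by
          show max (bj l) (bi l) - bi l = 0
          omega
        have h2 : joinSub bi bj l = 0 := by
          show max (bi l) (bj l) - bj l = 0
          omega
        rw [h1, h2]
  refine ⟨?_, hgrev, ?_⟩
  · rw [RingHom.mem_ker]
    show π _ = 0
    rw [map_sub, pi_monomial π hπ, pi_monomial π hπ, hvalτ, hvalσ, sub_self]
  · rintro ⟨b, hbB, hτb⟩
    have hbval : b = vj := by rw [← hmval b hbB, ← hτb, hvalτ]
    rcases hmmin b hbB (m bi + m (joinSub bj bi)) (by rw [hvalσ, hbval]) with h | h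
    · exact grevlex_irrefl _ (by rw [← hτb] at h; exact h ▸ hgrev)
    · exact grevlex_asymm hgrev (by rw [← hτb] at h; exact h)
end

section
/- In the simplicial setup, let Γ = {b₁ ≺ ⋯ ≺ b_t} be an equivalence class of B_A, h := (min{b_[k] : b ∈ Γ})_{k=1,…,d}, and Ĩ := (y^{(b₁−h)/α}, …, y^{(b_t−h)/α}) ⊂ T = K[y₁,…,y_d] the associated monomial ideal. If Ĩ is generated by monomials of degree 1 (that is, b_l − h ∈ {e₁,…,e_d} for every l), then for all 1 ≤ i < j ≤ t one has n(b_i, b_j) = m_{b_j}·y_k for some k, and hence deg n(b_i, b_j) ≤ r(K[B]) + 1. -/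
open SimplicialToric

lemma sumGens (c d α : ℕ) (a : Fin c → Fin d → ℕ) (hdeg : ∀ i, ∑ j, a i j = α)
    (v : Fin (c + d)) : ∑ j, gens c d α a v j = α := by
  induction v using Fin.addCases with
  | left i => simpa [gens] using hdeg i
  | right j => simp [gens, eVec]

lemma valE_sum (c d α : ℕ) (a : Fin c → Fin d → ℕ) (hdeg : ∀ i, ∑ j, a i j = α)
    (σ : Fin (c + d) →₀ ℕ) : ∑ j, valE c d α a σ j = α * degE σ := by
  unfold valE degE
  simp only [Finset.sum_apply, Pi.smul_apply, smul_eq_mul]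
  rw [Finset.sum_comm]
  rw [Finset.sum_congr rfl (fun v _ => by
    rw [← Finset.mul_sum, sumGens c d α a hdeg v])]
  rw [← Finset.sum_mul, mul_comm]

lemma single_of_sum_eq_one {N : ℕ} (τ : Fin N →₀ ℕ) (hτ : ∑ v, τ v = 1) :
    ∃ v, τ v = 1 ∧ ∀ w, w ≠ v → τ w = 0 := by
  have hex : ∃ v, τ v ≠ 0 := by
    by_contra hc
    push_neg at hc
    simp [hc] at hτ
  obtain ⟨v, hv⟩ := hex
  have hle : τ v ≤ ∑ w, τ w :=
    Finset.single_le_sum (fun w _ => Nat.zero_le _) (Finset.mem_univ v)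
  have hv1 : τ v = 1 := by omega
  refine ⟨v, hv1, fun w hw => ?_⟩
  have hrest : ∑ x ∈ Finset.univ.erase v, τ x = 0 := by
    have := Finset.add_sum_erase Finset.univ τ (Finset.mem_univ v)
    omega
  exact (Finset.sum_eq_zero_iff.mp hrest) w (Finset.mem_erase.mpr ⟨hw, Finset.mem_univ w⟩)

/-- If the monomial ideal associated with an equivalence class `Γ` of
`B_A` is generated in degree 1, then every `n(bᵢ,bⱼ)` (`bᵢ ≺ bⱼ` in `Γ`) equals
`m_{bⱼ}·y_k` for some `k` and has degree at most `r(K[B]) + 1`. -/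
theorem nmon_eq_mbj_mul_yk_of_deg_one_generated
    (c d α : ℕ) (hα : 0 < α)
    (a : Fin c → Fin d → ℕ) (B : AddSubmonoid (Fin d → ℕ))
    (hBgen : B = AddSubmonoid.closure (Set.range a ∪ Set.range (eVec d α)))
    (hhilb : Hilb B = Set.range a ∪ Set.range (eVec d α))
    (hdeg : ∀ i, ∑ j, a i j = α)
    (m : (Fin d → ℕ) → (Fin (c + d) →₀ ℕ))
    (hmval : ∀ b ∈ B, valE c d α a (m b) = b)
    (hmmin : ∀ b ∈ B, ∀ σ, valE c d α a σ = b → m b = σ ∨ grevlex (m b) σ)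
    (r : ℕ) (hr : IsGreatest {k | ∃ b ∈ BA B α, ∑ j, b j = α * k} r)
    (Γ : Set (Fin d → ℕ)) (hΓ : IsClass B α Γ)
    (h : Fin d → ℕ) (hh : ∀ j, IsLeast {v | ∃ b ∈ Γ, v = b j} (h j))
    (hdeg1 : ∀ b ∈ Γ, ∃ k : Fin d, b = fun j => h j + eVec d α k j) :
    ∀ bi ∈ Γ, ∀ bj ∈ Γ, ltCls bi bj →
      (∃ k : Fin d, m bj + m (joinSub bi bj)
          = m bj + Finsupp.single (Fin.natAdd c k) 1) ∧
      degE (m bj + m (joinSub bi bj)) ≤ r + 1 := by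
  intro bi hbi bj hbj hlt
  obtain ⟨ki, hbi'⟩ := hdeg1 bi hbi
  obtain ⟨kj, hbj'⟩ := hdeg1 bj hbj
  -- bi ≠ bj, hence ki ≠ kj
  have hbine : bi ≠ bj := by
    obtain ⟨k, hk, -⟩ := hlt
    intro he; rw [he] at hk; omega
  have hkne : ki ≠ kj := by
    intro he; apply hbine; rw [hbi', hbj', he]
  -- joinSub bi bj = eVec d α ki
  have hjoin : joinSub bi bj = eVec d α ki := by
    funext j
    simp only [joinSub, hbi', hbj', eVec]
    rcases eq_or_ne j ki with rfl | h1
    · rw [if_pos rfl, if_neg hkne, sup_eq_left.mpr (by omega)]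
      omega
    · rw [if_neg h1]
      rcases eq_or_ne j kj with rfl | h2
      · rw [if_pos rfl, sup_eq_right.mpr (by omega)]
        omega
      · rw [if_neg h2, sup_eq_right.mpr le_rfl]
        omega
  -- eVec d α ki ∈ B
  have hbB : eVec d α ki ∈ B := by
    rw [hBgen]
    exact AddSubmonoid.subset_closure (Set.mem_union_right _ ⟨ki, rfl⟩)
  set σ : Fin (c + d) →₀ ℕ := Finsupp.single (Fin.natAdd c ki) 1 with hσdef
  -- valE σ = eVec d α ki
  have hσval : valE c d α a σ = eVec d α ki := by
    unfold valE
    rw [Finset.sum_eq_single (Fin.natAdd c ki)]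
    · simp [hσdef, gens]
    · intro w _ hw
      simp [hσdef, Finsupp.single_apply, Ne.symm hw]
    · intro hmem; exact absurd (Finset.mem_univ _) hmem
  have hσdeg : degE σ = 1 := by
    unfold degE
    simp [hσdef, Finsupp.single_apply]
  -- degree of m (eVec d α ki) is 1
  have hsum : ∑ j, eVec d α ki j = α := by simp [eVec]
  have hmbdeg : degE (m (eVec d α ki)) = 1 := by
    have h1 : ∑ j, valE c d α a (m (eVec d α ki)) j = α * degE (m (eVec d α ki)) :=
      valE_sum c d α a hdeg _
    rw [hmval _ hbB, hsum] at h1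
    have h2 : α * 1 = α * degE (m (eVec d α ki)) := by rw [mul_one]; exact h1
    exact (Nat.eq_of_mul_eq_mul_left hα h2).symm
  -- m (eVec d α ki) = σ
  have hm : m (eVec d α ki) = σ := by
    rcases hmmin _ hbB σ hσval with he | hg
    · exact he
    rcases hg with hlt' | ⟨hdeq, k0, hk0, htail⟩
    · rw [hmbdeg, hσdeg] at hlt'; omega
    exfalso
    obtain ⟨v, hv1, hv0⟩ := single_of_sum_eq_one (m (eVec d α ki)) hmbdeg
    have hk0v : k0 = v := by
      by_contra hc
      rw [hv0 k0 hc] at hk0; omega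
    subst hk0v
    rcases lt_or_ge (k0 : ℕ) c with hc | hc
    · -- k0 is an x-variable: tail condition fails at natAdd c ki
      have hlt2 : k0 < Fin.natAdd c ki := by
        simp only [Fin.lt_def, Fin.coe_natAdd]; omega
      have h1 := htail (Fin.natAdd c ki) hlt2
      have hne' : Fin.natAdd c ki ≠ k0 := by
        simp only [ne_eq, Fin.ext_iff, Fin.coe_natAdd]; omega
      rw [hv0 _ hne'] at h1
      simp [hσdef] at h1
    · -- k0 is a y-variable
      have hk0d : (k0 : ℕ) - c < d := by omega
      set j0 : Fin d := ⟨(k0 : ℕ) - c, hk0d⟩ with hj0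
      have hk0eq : k0 = Fin.natAdd c j0 := by
        simp only [Fin.ext_iff, Fin.coe_natAdd, hj0]; omega
      have hval : valE c d α a (m (eVec d α ki)) = gens c d α a k0 := by
        unfold valE
        rw [Finset.sum_eq_single k0]
        · rw [hv1, one_smul]
        · intro w _ hw; rw [hv0 w hw, zero_smul]
        · intro hmem; exact absurd (Finset.mem_univ _) hmem
      rw [hmval _ hbB, hk0eq] at hval
      have hgj : gens c d α a (Fin.natAdd c j0) = eVec d α j0 := by simp [gens]
      rw [hgj] at hval
      have hjki : j0 = ki := by
        by_contra hcc
        have hco := congrFun hval ki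
        simp [eVec, Ne.symm hcc] at hco
        omega
      have hσk0 : σ k0 = 1 := by
        rw [hk0eq, hjki, hσdef]; simp
      rw [hσk0, hv1] at hk0
      omega
  -- conclusions
  have hbjBA : bj ∈ BA B α := by
    obtain ⟨x, hx, hΓeq⟩ := hΓ
    rw [hΓeq] at hbj
    exact hbj.1
  have hbjB : bj ∈ B := hbjBA.1
  constructor
  · exact ⟨ki, by rw [hjoin, hm]⟩
  · have hadd : degE (m bj + m (joinSub bi bj)) = degE (m bj) + degE (m (joinSub bi bj)) := by
      unfold degE
      simp [Finsupp.add_apply, Finset.sum_add_distrib]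
    have hdj : degE (m (joinSub bi bj)) = 1 := by rw [hjoin, hm, hσdeg]
    have hle : degE (m bj) ≤ r := by
      apply hr.2
      refine ⟨bj, hbjBA, ?_⟩
      have hv := valE_sum c d α a hdeg (m bj)
      rw [hmval _ hbjB] at hv
      exact hv
    omega
end
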